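/- For every α ∈ (0,1)∪(1,∞), the limit of c_α^{(∞)}(ρ) as ρ ↓ 1 equals 0, where c_α^{(∞)}(ρ) := (1/(α−1))·log(1 + (1 + α(ρ−1) − ρ^α)/((1−α)(ρ−1))) − (α/(α−1))·log(1 + (1 + α(ρ−1) − ρ^α)/((1−α)(ρ^α−1))) for ρ > 1. -/

import Mathlib

open Finset

/-- `P` is a probability mass function, strictly positive on `{1,…,n}`. -/
def IsPMF (n : ℕ) (P : ℕ → ℝ) : Prop :=
  (∀ i ∈ Finset.Icc 1 n, 0 < P i) ∧ ∑ i ∈ Finset.Icc 1 n, P i = 1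

/-- The ratio of the maximal to minimal mass of `P` on `{1,…,n}` is at most `ρ`. -/
def RatioBdd (n : ℕ) (ρ : ℝ) (P : ℕ → ℝ) : Prop :=
  ∀ i ∈ Finset.Icc 1 n, ∀ j ∈ Finset.Icc 1 n, P i ≤ ρ * P j

/-- `P` is nonincreasing on `{1,…,n}`. -/
def DecOn (n : ℕ) (P : ℕ → ℝ) : Prop :=
  ∀ i ∈ Finset.Icc 1 n, ∀ j ∈ Finset.Icc 1 n, i ≤ j → P j ≤ P i

/-- Sum of the `k` largest masses of `P` on `{1,…,n}`. -/
noncomputable def topSum (n : ℕ) (P : ℕ → ℝ) (k : ℕ) : ℝ :=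
  sSup ((fun s : Finset ℕ => ∑ i ∈ s, P i) '' {s | s ⊆ Finset.Icc 1 n ∧ s.card = k})

/-- `P ≺ Q`: `P` is majorized by `Q`, both viewed on `{1,…,n}`. -/
def MajorizedBy (n : ℕ) (P Q : ℕ → ℝ) : Prop :=
  ∀ k, 1 ≤ k → k ≤ n - 1 → topSum n P k ≤ topSum n Q k

/-- Zero-padding of a pmf on `{1,…,m}` outside of `{1,…,m}`. -/
def padTo (m : ℕ) (Q : ℕ → ℝ) : ℕ → ℝ := fun i => if i ≤ m then Q i else 0

/-- Rényi entropy of order `α` of `P` on `{1,…,n}` (Shannon entropy for `α = 1`);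
natural logarithms. -/
noncomputable def renyiH (n : ℕ) (α : ℝ) (P : ℕ → ℝ) : ℝ :=
  if α = 1 then -∑ i ∈ Finset.Icc 1 n, P i * Real.log (P i)
  else (1 - α)⁻¹ * Real.log (∑ i ∈ Finset.Icc 1 n, P i ^ α)

/-- `c_α^{(n)}(ρ) = log n − min_{P ∈ 𝒫_n(ρ)} H_α(P)` for `n ≥ 2`, and `0` for `n ≤ 1`. -/
noncomputable def cN (α ρ : ℝ) (n : ℕ) : ℝ :=
  if n ≤ 1 then 0
  else Real.log n - sInf (renyiH n α '' {P | IsPMF n P ∧ RatioBdd n ρ P})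

/-- The closed-form expression for `c_α^{(∞)}(ρ)`, `α ∈ (0,1) ∪ (1,∞)`. -/
noncomputable def cInfinity (α ρ : ℝ) : ℝ :=
  (α - 1)⁻¹ * Real.log (1 + (1 + α * (ρ - 1) - ρ ^ α) / ((1 - α) * (ρ - 1)))
    - α / (α - 1) * Real.log (1 + (1 + α * (ρ - 1) - ρ ^ α) / ((1 - α) * (ρ ^ α - 1)))

/-- `v(α) := c_α^{(∞)}(2)`, with the continuous extension at `α = 1`. -/
noncomputable def vFun (α : ℝ) : ℝ :=
  if α = 1 then Real.log (2 / (Real.exp 1 * Real.log 2))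
  else Real.log ((α - 1) / ((2 : ℝ) ^ α - 2)) - α / (α - 1) * Real.log (α / ((2 : ℝ) ^ α - 1))

/-- `n*`: the maximal `i ∈ {1,…,m−1}` with `P i ≥ (m−i)⁻¹ ∑_{j=i+1}^n P j`. -/
noncomputable def nStar (n m : ℕ) (P : ℕ → ℝ) : ℕ :=
  sSup {i : ℕ | 1 ≤ i ∧ i ≤ m - 1 ∧
    ((m : ℝ) - (i : ℝ))⁻¹ * ∑ j ∈ Finset.Icc (i + 1) n, P j ≤ P i}

/-- The pmf of `X̃_m` on `{1,…,m}`, built from a nonincreasing pmf `P` on `{1,…,n}`. -/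
noncomputable def tildeX (n m : ℕ) (P : ℕ → ℝ) : ℕ → ℝ := fun i =>
  if P 1 < 1 / (m : ℝ) then 1 / (m : ℝ)
  else if i ≤ nStar n m P then P i
  else ((m : ℝ) - (nStar n m P : ℝ))⁻¹ * ∑ j ∈ Finset.Icc (nStar n m P + 1) n, P j

/-- The pmf of `Ỹ_m` on `{1,…,m}`. -/
def tildeY (n m : ℕ) (P : ℕ → ℝ) : ℕ → ℝ := fun i =>
  if i = 1 then ∑ j ∈ Finset.Icc 1 (n - m + 1), P j else P (n - m + i)

/-- The pmf of `f(X)`: `(push n f P) j = ∑_{i ∈ {1,…,n}, f i = j} P i`. -/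
def push (n : ℕ) (f : ℕ → ℕ) (P : ℕ → ℝ) : ℕ → ℝ := fun j =>
  ∑ i ∈ (Finset.Icc 1 n).filter (fun i => f i = j), P i

/-- The set `{1,…,n}^k` of source sequences of length `k`. -/
def seqSet (n k : ℕ) : Finset (Fin k → ℕ) := Fintype.piFinset fun _ => Finset.Icc 1 n

/-- Product (i.i.d.) probability of a sequence. -/
def prodP (k : ℕ) (P : ℕ → ℝ) (x : Fin k → ℕ) : ℝ := ∏ i, P (x i)

/-- `g` is a ranking function for the i.i.d. vector on `{1,…,n}^k` with marginal `P`: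
a bijection onto `{1,…,n^k}` which assigns smaller ranks to larger masses. -/
def IsRanking (n k : ℕ) (P : ℕ → ℝ) (g : (Fin k → ℕ) → ℕ) : Prop :=
  Set.BijOn g (↑(seqSet n k)) (Set.Icc 1 (n ^ k)) ∧
    ∀ x ∈ seqSet n k, ∀ y ∈ seqSet n k, prodP k P y < prodP k P x → g x < g y

/-- The `ρ`-th guessing moment `E[g(Z^k)^ρ]`. -/
noncomputable def gmoment (n k : ℕ) (P : ℕ → ℝ) (g : (Fin k → ℕ) → ℕ) (ρ : ℝ) : ℝ :=
  ∑ x ∈ seqSet n k, prodP k P x * (g x : ℝ) ^ ρ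

/-- Kraft inequality for a `D`-ary length function on `{1,…,n}^k`. -/
def Kraft (n k D : ℕ) (ℓ : (Fin k → ℕ) → ℕ) : Prop :=
  ∑ x ∈ seqSet n k, (D : ℝ) ^ (-(ℓ x : ℝ)) ≤ 1

/-- Scaled cumulant generating function `Λ_k(ρ)` of the codeword lengths (base-`D` log). -/
noncomputable def cgf (n k D : ℕ) (P : ℕ → ℝ) (ℓ : (Fin k → ℕ) → ℕ) (ρ : ℝ) : ℝ :=
  (1 / (k : ℝ)) * Real.logb D (∑ x ∈ seqSet n k, prodP k P x * (D : ℝ) ^ (ρ * (ℓ x : ℝ)))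

/-- `i_β` of Lemma 2. -/
noncomputable def iBeta (n : ℕ) (ρ β : ℝ) : ℕ := Nat.floor ((1 - (n : ℝ) * β) / ((ρ - 1) * β))

/-- The pmf `Q_β` of Lemma 2. -/
noncomputable def Qbeta (n : ℕ) (ρ β : ℝ) : ℕ → ℝ := fun j =>
  if j ≤ iBeta n ρ β then ρ * β
  else if j = iBeta n ρ β + 1 then
    1 - ((n : ℝ) + (iBeta n ρ β : ℝ) * ρ - (iBeta n ρ β : ℝ) - 1) * β
  else β

theorem stmt6 (α : ℝ) (hα : 0 < α) (hα1 : α ≠ 1) :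
    Filter.Tendsto (fun ρ : ℝ => cInfinity α ρ) (nhdsWithin 1 (Set.Ioi 1)) (nhds 0) := by
  have hα1' : (1 : ℝ) - α ≠ 0 := by intro h; apply hα1; linarith
  set g : ℝ → ℝ := fun ρ => (ρ ^ α - 1) / (ρ - 1) with hg_def
  have hderiv : HasDerivAt (fun x : ℝ => x ^ α) α 1 := by
    simpa using Real.hasDerivAt_rpow_const (x := 1) (p := α) (Or.inl one_ne_zero)
  have hslope := hasDerivAt_iff_tendsto_slope.mp hderiv
  have hsub : nhdsWithin (1 : ℝ) (Set.Ioi 1) ≤ nhdsWithin (1 : ℝ) {(1 : ℝ)}ᶜ :=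
    nhdsWithin_mono _ (fun x hx => ne_of_gt hx)
  have hg : Filter.Tendsto g (nhdsWithin 1 (Set.Ioi 1)) (nhds α) := by
    refine (hslope.mono_left hsub).congr' ?_
    filter_upwards [self_mem_nhdsWithin] with ρ hρ
    simp [slope_def_field, hg_def, Real.one_rpow]
  have hF : Filter.Tendsto (fun ρ => (α - g ρ) / (1 - α)) (nhdsWithin 1 (Set.Ioi 1))
      (nhds 0) := by
    have := ((tendsto_const_nhds : Filter.Tendsto (fun _ : ℝ => α) (nhdsWithin 1 (Set.Ioi 1)) (nhds α)).sub hg).div_const (1 - α)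
    simpa using this
  have hG : Filter.Tendsto (fun ρ => (α - g ρ) / ((1 - α) * g ρ)) (nhdsWithin 1 (Set.Ioi 1))
      (nhds 0) := by
    have hden : Filter.Tendsto (fun ρ => (1 - α) * g ρ) (nhdsWithin 1 (Set.Ioi 1))
        (nhds ((1 - α) * α)) := tendsto_const_nhds.mul hg
    have := ((tendsto_const_nhds : Filter.Tendsto (fun _ : ℝ => α) (nhdsWithin 1 (Set.Ioi 1)) (nhds α)).sub hg).div hden (mul_ne_zero hα1' hα.ne')
    simpa [Pi.div_def] using this
  have hlog : ∀ F : ℝ → ℝ, Filter.Tendsto F (nhdsWithin 1 (Set.Ioi 1)) (nhds 0) →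
      Filter.Tendsto (fun ρ => Real.log (1 + F ρ)) (nhdsWithin 1 (Set.Ioi 1)) (nhds 0) := by
    intro F hFt
    have h1 : Filter.Tendsto (fun ρ => 1 + F ρ) (nhdsWithin 1 (Set.Ioi 1)) (nhds 1) := by
      simpa using tendsto_const_nhds.add hFt
    have := (Real.continuousAt_log one_ne_zero).tendsto.comp h1
    simpa [Real.log_one, Function.comp_def] using this
  have hmain : Filter.Tendsto
      (fun ρ => (α - 1)⁻¹ * Real.log (1 + (α - g ρ) / (1 - α))
        - α / (α - 1) * Real.log (1 + (α - g ρ) / ((1 - α) * g ρ)))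
      (nhdsWithin 1 (Set.Ioi 1)) (nhds 0) := by
    have h1 := ((tendsto_const_nhds : Filter.Tendsto (fun _ : ℝ => (α - 1)⁻¹) (nhdsWithin 1 (Set.Ioi 1)) (nhds ((α - 1)⁻¹))).mul (hlog _ hF))
    have h2 := ((tendsto_const_nhds : Filter.Tendsto (fun _ : ℝ => α / (α - 1)) (nhdsWithin 1 (Set.Ioi 1)) (nhds (α / (α - 1)))).mul (hlog _ hG))
    have := h1.sub h2
    simpa using this
  refine hmain.congr' ?_
  filter_upwards [self_mem_nhdsWithin] with ρ hρ
  have hρ1 : (1 : ℝ) < ρ := hρ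
  have hρ1' : ρ - 1 ≠ 0 := sub_ne_zero.mpr hρ1.ne'
  have hρα : (1 : ℝ) < ρ ^ α := Real.one_lt_rpow_iff_of_pos (by linarith) |>.mpr (Or.inl ⟨hρ1, hα⟩)
  have hρα' : ρ ^ α - 1 ≠ 0 := sub_ne_zero.mpr hρα.ne'
  have e1 : (1 + α * (ρ - 1) - ρ ^ α) / ((1 - α) * (ρ - 1)) = (α - g ρ) / (1 - α) := by
    rw [hg_def]; field_simp; ring
  have e2 : (1 + α * (ρ - 1) - ρ ^ α) / ((1 - α) * (ρ ^ α - 1))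
      = (α - g ρ) / ((1 - α) * g ρ) := by
    rw [hg_def]; field_simp; ring
  simp only [cInfinity, e1, e2]
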